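/- arXiv:1408.3719 — 3 statements merged into one kernel-verified Lean document; each statement's English description precedes it below -/
import Mathlib

section
/- Let E be a finite set, S : E → Finset E a symmetric stencil relation (j ∈ S i if and only if i ∈ S j), and t, Δt : E → ℝ with Δt i > 0 for all i, satisfying the stencil invariant: for every i ∈ E and every j ∈ S i, t j ≤ t i + Δt i. Suppose i₀ ∈ E satisfies the update criterion (for all j ∈ S i₀: t j ≤ t i₀ + Δt i₀ and t i₀ + Δt i₀ ≤ t j + Δt j) and performs its update: define t' i₀ = t i₀ + Δt i₀, t' i = t i for i ≠ i₀, and Δt' i₀ = δ for an arbitrary δ > 0 while Δt' i = Δt i for i ≠ i₀. Then the stencil invariant still holds for t' and Δt': for every i ∈ E and every j ∈ S i, t' j ≤ t' i + Δt' i. -/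
/-- **The LTS update preserves the stencil invariant.**
If the symmetric-stencil invariant `t j ≤ t i + Δt i` (for `j ∈ S i`) holds, the element `i₀`
satisfies the update criterion and performs its update (its current time becomes its old
future time and it receives an arbitrary new positive timestep `δ`), then the stencil
invariant still holds for the updated times `t'` and timesteps `Δt'`. -/
theorem lts_update_preserves_invariant
    {E : Type*} [Fintype E]
    (S : E → Finset E) (hsym : ∀ i j : E, j ∈ S i ↔ i ∈ S j)
    (t Δt : E → ℝ) (hΔt : ∀ i, 0 < Δt i)
    (hinv : ∀ i : E, ∀ j ∈ S i, t j ≤ t i + Δt i)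
    (i₀ : E)
    (hcrit : ∀ j ∈ S i₀, t j ≤ t i₀ + Δt i₀ ∧ t i₀ + Δt i₀ ≤ t j + Δt j)
    (δ : ℝ) (hδ : 0 < δ)
    (t' Δt' : E → ℝ)
    (ht'i₀ : t' i₀ = t i₀ + Δt i₀) (ht' : ∀ i : E, i ≠ i₀ → t' i = t i)
    (hΔt'i₀ : Δt' i₀ = δ) (hΔt' : ∀ i : E, i ≠ i₀ → Δt' i = Δt i) :
    ∀ i : E, ∀ j ∈ S i, t' j ≤ t' i + Δt' i := by
  intro i j hj
  by_cases hi : i = i₀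
  · subst hi
    rw [ht'i₀, hΔt'i₀]
    by_cases hji : j = i
    · subst hji; have := hΔt j; linarith
    · rw [ht' j hji]
      have := (hcrit j hj).1
      linarith
  · rw [ht' i hi, hΔt' i hi]
    by_cases hji : j = i₀
    · subst hji
      rw [ht'i₀]
      exact (hcrit i ((hsym i j).mp hj)).2
    · rw [ht' j hji]
      exact hinv i j hj
end

section
/- Let E be a finite set of elements, i₀ ∈ E, and N ⊆ E a set of neighbors of i₀ with i₀ ∉ N. Let V, V' : E → ℝ with V' k = V k for k ≠ i₀ (cell volumes before and after the update), Q, M : E → ℝ^ν (cell averages and memory variables), and G : E → ℝ^ν (edge fluxes, supported on N). Define the single-element LTS update: Q' i₀ satisfies V' i₀ • Q' i₀ = V i₀ • Q i₀ − ∑_{j ∈ N} G j + M i₀, and Q' k = Q k for k ≠ i₀; the memory variables are updated by M' i₀ = 0, M' j = M j + G j for j ∈ N, and M' k = M k otherwise. Then the total conserved quantity is exactly preserved: ∑_{k ∈ E} (V' k • Q' k + M' k) = ∑_{k ∈ E} (V k • Q k + M k). -/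
/-- **Exact conservation of the single-element LTS update with memory variables.**
When element `i₀` updates its volume-weighted cell average by subtracting the edge fluxes
`G j` towards its neighbors `N` and adding its accumulated memory variable `M i₀`, and when
afterwards its memory variable is reset to zero while each flux `G j` is accumulated into
the memory variable of the corresponding neighbor, the total conserved quantity
`∑ k (V k • Q k + M k)` is exactly preserved. -/
theorem lts_memory_update_conservative
    {E : Type*} [Fintype E] (ν : ℕ)
    (i₀ : E) (N : Finset E) (hi₀ : i₀ ∉ N)
    (V V' : E → ℝ) (hV' : ∀ k : E, k ≠ i₀ → V' k = V k)
    (Q Q' M M' G : E → (Fin ν → ℝ))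
    (hGsupp : ∀ j : E, j ∉ N → G j = 0)
    (hupd : V' i₀ • Q' i₀ = V i₀ • Q i₀ - (∑ j ∈ N, G j) + M i₀)
    (hQ' : ∀ k : E, k ≠ i₀ → Q' k = Q k)
    (hM'i₀ : M' i₀ = 0)
    (hM'N : ∀ j ∈ N, M' j = M j + G j)
    (hM' : ∀ k : E, k ∉ N → k ≠ i₀ → M' k = M k) :
    ∑ k : E, (V' k • Q' k + M' k) = ∑ k : E, (V k • Q k + M k) := by
  classical
  have hsplit : ∀ (f : E → (Fin ν → ℝ)),
      ∑ k : E, f k = f i₀ + ∑ k ∈ Finset.univ.erase i₀, f k := by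
    intro f
    rw [← Finset.add_sum_erase _ f (Finset.mem_univ i₀)]
  rw [hsplit, hsplit]
  have h1 : ∀ k ∈ Finset.univ.erase i₀,
      V' k • Q' k + M' k = (V k • Q k + M k) + (if k ∈ N then G k else 0) := by
    intro k hk
    have hk' : k ≠ i₀ := (Finset.mem_erase.mp hk).1
    rw [hV' k hk', hQ' k hk']
    by_cases hN : k ∈ N
    · rw [hM'N k hN, if_pos hN]; abel
    · rw [hM' k hN hk', if_neg hN]; abel
  rw [Finset.sum_congr rfl h1, Finset.sum_add_distrib, Finset.sum_ite_mem]
  have hNsub : Finset.univ.erase i₀ ∩ N = N := by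
    apply Finset.inter_eq_right.mpr
    intro j hj
    exact Finset.mem_erase.mpr ⟨fun h => hi₀ (h ▸ hj), Finset.mem_univ j⟩
  rw [hNsub, hupd, hM'i₀]
  abel
end

section
/- Fix γ > 1 and ε ∈ ℝ, and define on ℝ² (with center at the origin and r² = x² + y²): the temperature perturbation δT(x, y) = −((γ − 1) ε² / (8 γ π²)) · exp(1 − r²), the rotational velocity field u(x, y) = −y φ(x,y), v(x, y) = x φ(x,y) with φ(x,y) = (ε / (2π)) exp((1 − r²)/2), the density ρ = (1 + δT)^{1/(γ−1)}, the pressure p = (1 + δT)^{γ/(γ−1)}, and the total energy density ρE = p/(γ−1) + ½ ρ (u² + v²). Assume 1 + δT(x,y) > 0 for all (x,y) ∈ ℝ². Then these fields form an exact steady solution of the 2D compressible Euler equations: at every point, ∂_x(ρu) + ∂_y(ρv) = 0, ∂_x(ρu² + p) + ∂_y(ρuv) = 0, ∂_x(ρuv) + ∂_y(ρv² + p) = 0, and ∂_x(u(ρE + p)) + ∂_y(v(ρE + p)) = 0. -/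
set_option maxHeartbeats 4000000 in
/-- **The isentropic vortex of Hu and Shu is an exact steady solution of the 2D
compressible Euler equations.** With temperature perturbation `δT`, rotational velocity
`(u,v) = φ(r)(−y, x)`, density `ρ = (1+δT)^{1/(γ−1)}`, pressure `p = (1+δT)^{γ/(γ−1)}` and
total energy `ρE = p/(γ−1) + ½ρ(u²+v²)`, all four stationary conservation laws hold at
every point of `ℝ²`. -/
theorem isentropic_vortex_steady_euler_solution
    (γ ε : ℝ) (hγ : 1 < γ)
    (δT φ u v ρ p ρE : ℝ → ℝ → ℝ)
    (hδT : ∀ x y : ℝ, δT x y =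
      -((γ - 1) * ε ^ 2 / (8 * γ * Real.pi ^ 2)) * Real.exp (1 - (x ^ 2 + y ^ 2)))
    (hφ : ∀ x y : ℝ, φ x y = (ε / (2 * Real.pi)) * Real.exp ((1 - (x ^ 2 + y ^ 2)) / 2))
    (hu : ∀ x y : ℝ, u x y = -y * φ x y)
    (hv : ∀ x y : ℝ, v x y = x * φ x y)
    (hρ : ∀ x y : ℝ, ρ x y = (1 + δT x y) ^ (1 / (γ - 1)))
    (hp : ∀ x y : ℝ, p x y = (1 + δT x y) ^ (γ / (γ - 1)))
    (hρE : ∀ x y : ℝ, ρE x y = p x y / (γ - 1) + (1 / 2) * ρ x y * (u x y ^ 2 + v x y ^ 2))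
    (hpos : ∀ x y : ℝ, 0 < 1 + δT x y) :
    ∀ x y : ℝ,
      deriv (fun s => ρ s y * u s y) x + deriv (fun s => ρ x s * v x s) y = 0 ∧
      deriv (fun s => ρ s y * u s y ^ 2 + p s y) x
        + deriv (fun s => ρ x s * u x s * v x s) y = 0 ∧
      deriv (fun s => ρ s y * u s y * v s y) x
        + deriv (fun s => ρ x s * v x s ^ 2 + p x s) y = 0 ∧
      deriv (fun s => u s y * (ρE s y + p s y)) x
        + deriv (fun s => v x s * (ρE x s + p x s)) y = 0 := by
  intro x y
  have hγ1 : γ - 1 ≠ 0 := sub_ne_zero.mpr (ne_of_gt hγ)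
  have hγ0 : γ ≠ 0 := ne_of_gt (lt_trans one_pos hγ)
  have hπ : Real.pi ≠ 0 := Real.pi_ne_zero
  have hne : (1 + -((γ - 1) * ε ^ 2 / (8 * γ * Real.pi ^ 2)) *
      Real.exp (1 - (x ^ 2 + y ^ 2))) ≠ 0 := by
    have h := hpos x y
    rw [hδT x y] at h
    exact ne_of_gt h
  -- x-direction blocks
  have h1 := ((hasDerivAt_pow 2 x).add_const (y ^ 2 : ℝ)).const_sub 1
  have h2 := h1.exp
  have h3 := (h2.const_mul (-((γ - 1) * ε ^ 2 / (8 * γ * Real.pi ^ 2)))).const_add 1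
  have h4 := h3.rpow_const (p := 1 / (γ - 1)) (Or.inl hne)
  have h7 := h3.rpow_const (p := γ / (γ - 1)) (Or.inl hne)
  have h5 := (h1.div_const 2).exp
  have h6 := h5.const_mul (ε / (2 * Real.pi))
  have hux := h6.const_mul (-y)
  have hvx := (hasDerivAt_id' x).fun_mul h6
  -- y-direction blocks
  have h1' := ((hasDerivAt_pow 2 y).const_add (x ^ 2 : ℝ)).const_sub 1
  have h2' := h1'.exp
  have h3' := (h2'.const_mul (-((γ - 1) * ε ^ 2 / (8 * γ * Real.pi ^ 2)))).const_add 1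
  have h4' := h3'.rpow_const (p := 1 / (γ - 1)) (Or.inl hne)
  have h7' := h3'.rpow_const (p := γ / (γ - 1)) (Or.inl hne)
  have h5' := (h1'.div_const 2).exp
  have h6' := h5'.const_mul (ε / (2 * Real.pi))
  have huy := ((hasDerivAt_id' y).fun_neg).fun_mul h6'
  have hvy := h6'.const_mul x
  have hba : γ / (γ - 1) - 1 = 1 / (γ - 1) := by field_simp; ring
  have hEF : Real.exp (1 - (x ^ 2 + y ^ 2)) =
      Real.exp ((1 - (x ^ 2 + y ^ 2)) / 2) * Real.exp ((1 - (x ^ 2 + y ^ 2)) / 2) := by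
    rw [← Real.exp_add]; congr 1; ring
  refine ⟨?_, ?_, ?_, ?_⟩
  · simp only [hρE, hp, hρ, hu, hv, hφ, hδT]
    rw [(h4.fun_mul hux).deriv, (h4'.fun_mul hvy).deriv]
    ring
  · simp only [hρE, hp, hρ, hu, hv, hφ, hδT]
    rw [((h4.fun_mul (hux.fun_pow 2)).fun_add h7).deriv, ((h4'.fun_mul huy).fun_mul hvy).deriv]
    rw [hba, hEF]
    field_simp
    ring_nf
    field_simp
    ring_nf
  · simp only [hρE, hp, hρ, hu, hv, hφ, hδT]
    rw [((h4.fun_mul hux).fun_mul hvx).deriv, ((h4'.fun_mul (hvy.fun_pow 2)).fun_add h7').deriv]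
    rw [hba, hEF]
    field_simp
    ring_nf
    field_simp
    ring_nf
  · simp only [hρE, hp, hρ, hu, hv, hφ, hδT]
    rw [(hux.fun_mul (((h7.div_const (γ - 1)).fun_add
        ((h4.const_mul (1 / 2)).fun_mul ((hux.fun_pow 2).fun_add (hvx.fun_pow 2)))).fun_add h7)).deriv,
      (hvy.fun_mul (((h7'.div_const (γ - 1)).fun_add
        ((h4'.const_mul (1 / 2)).fun_mul ((huy.fun_pow 2).fun_add (hvy.fun_pow 2)))).fun_add h7')).deriv]
    ring
end
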